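/- If f ∈ 𝒮(ℝ) has support in (0,∞), then f̂⁺(β) := i e^β f̃(e^β) extends to a bounded analytic function on the strip {0 < Im β < π}, with bound |f̂⁺(β+iλ)| ≤ (2π)^{−1/2}‖f'‖_{L¹} for 0 ≤ λ ≤ π, and boundary value f̂⁺(β+iπ) = f̂⁻(β) := −i e^β f̃(−e^β) for real β. -/

import Mathlib

open MeasureTheory

/-- Fourier transform with the paper's convention `f̃(p) = (2π)^{-1/2} ∫ f(ξ) e^{ipξ} dξ`. -/
noncomputable def ftilde (f : ℝ → ℂ) (p : ℝ) : ℂ :=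
  (Real.sqrt (2 * Real.pi) : ℂ)⁻¹ * ∫ x : ℝ, f x * Complex.exp (Complex.I * p * x)

/-- `f̂⁺(β) := i e^β f̃(e^β)`. -/
noncomputable def hatPlus (f : ℝ → ℂ) (β : ℝ) : ℂ :=
  Complex.I * Real.exp β * ftilde f (Real.exp β)

/-- `f̂⁻(β) := −i e^β f̃(−e^β)`. -/
noncomputable def hatMinus (f : ℝ → ℂ) (β : ℝ) : ℂ :=
  -(Complex.I * Real.exp β * ftilde f (-Real.exp β))

/-- The analytic continuation `f̂⁺(ζ) = i e^ζ f̃(e^ζ)` to complex `ζ`,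
using the analytically continued Fourier transform. -/
noncomputable def hatPlusC (f : ℝ → ℂ) (ζ : ℂ) : ℂ :=
  Complex.I * Complex.exp ζ * ((Real.sqrt (2 * Real.pi) : ℂ)⁻¹ *
    ∫ x : ℝ, f x * Complex.exp (Complex.I * Complex.exp ζ * x))

namespace Stmt11Aux

open Complex Filter

lemma norm_exp_Ipx_le {p : ℂ} (hp : 0 ≤ p.im) {x : ℝ} (hx : 0 ≤ x) :
    ‖Complex.exp (Complex.I * p * x)‖ ≤ 1 := by
  rw [Complex.norm_exp]
  have h : (Complex.I * p * (x : ℂ)).re = -(p.im * x) := by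
    simp [Complex.mul_re, Complex.mul_im]
  rw [h, Real.exp_le_one_iff]
  nlinarith

variable (f : SchwartzMap ℝ ℂ) (hsupp : Function.support (f : ℝ → ℂ) ⊆ Set.Ioi 0)

include hsupp

lemma f_zero {x : ℝ} (hx : x ≤ 0) : f x = 0 := by
  by_contra h
  exact absurd (hsupp h) (by simpa using hx)

lemma deriv_f_zero {x : ℝ} (hx : x < 0) : deriv (⇑f) x = 0 := by
  have hev : (⇑f) =ᶠ[nhds x] (fun _ => (0 : ℂ)) := by
    filter_upwards [Iio_mem_nhds hx] with y hy
    exact f_zero f hsupp (le_of_lt hy)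
  rw [hev.deriv_eq]
  simp

lemma bound_f_mul (p : ℂ) (hp : 0 ≤ p.im) (x : ℝ) :
    ‖f x * Complex.exp (Complex.I * p * x)‖ ≤ ‖f x‖ := by
  by_cases h : f x = 0
  · simp [h]
  · have hx : 0 < x := hsupp h
    rw [norm_mul]
    exact mul_le_of_le_one_right (norm_nonneg _) (norm_exp_Ipx_le hp hx.le)

lemma bound_deriv_mul (p : ℂ) (hp : 0 ≤ p.im) (x : ℝ) :
    ‖deriv (⇑f) x * Complex.exp (Complex.I * p * x)‖ ≤ ‖deriv (⇑f) x‖ := by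
  rcases lt_or_ge x 0 with hx | hx
  · simp [deriv_f_zero f hsupp hx]
  · rw [norm_mul]
    exact mul_le_of_le_one_right (norm_nonneg _) (norm_exp_Ipx_le hp hx)

lemma deriv_eq_clm : deriv (⇑f) = ⇑(SchwartzMap.derivCLM ℝ ℂ f) :=
  funext fun x => (SchwartzMap.derivCLM_apply ℝ f x).symm

omit hsupp in
lemma meas_mul (p : ℂ) :
    AEStronglyMeasurable (fun x : ℝ => f x * Complex.exp (Complex.I * p * x)) volume := by
  refine Continuous.aestronglyMeasurable ?_
  exact f.continuous.mul (Complex.continuous_exp.comp (by continuity))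

lemma integrable_f_mul (p : ℂ) (hp : 0 ≤ p.im) :
    Integrable (fun x : ℝ => f x * Complex.exp (Complex.I * p * x)) := by
  exact (f.integrable.norm).mono' (meas_mul f p)
    (Filter.Eventually.of_forall (bound_f_mul f hsupp p hp))

lemma integrable_deriv_mul (p : ℂ) (hp : 0 ≤ p.im) :
    Integrable (fun x : ℝ => deriv (⇑f) x * Complex.exp (Complex.I * p * x)) := by
  have h1 : Integrable (fun x : ℝ => deriv (⇑f) x) := by
    rw [deriv_eq_clm f hsupp]; exact (SchwartzMap.derivCLM ℝ ℂ f).integrable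
  refine h1.norm.mono' ?_ (Filter.Eventually.of_forall (bound_deriv_mul f hsupp p hp))
  rw [deriv_eq_clm f hsupp]
  exact (meas_mul (SchwartzMap.derivCLM ℝ ℂ f) p)

lemma tendsto_f_atTop : Tendsto (⇑f) atTop (nhds 0) := by
  exact (zero_at_infty f).mono_left atTop_le_cocompact

/-- Integration by parts. -/
lemma ibp (p : ℂ) (hp : 0 ≤ p.im) :
    Complex.I * p * ∫ x : ℝ, f x * Complex.exp (Complex.I * p * x)
      = -∫ x : ℝ, deriv (⇑f) x * Complex.exp (Complex.I * p * x) := by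
  set e : ℝ → ℂ := fun x => Complex.exp (Complex.I * p * x) with he
  have hderiv : ∀ x : ℝ, HasDerivAt (fun y : ℝ => f y * e y)
      (deriv (⇑f) x * e x + f x * (e x * (Complex.I * p))) x := by
    intro x
    have h1 : HasDerivAt (⇑f) (deriv (⇑f) x) x := f.differentiableAt.hasDerivAt
    have h2c : HasDerivAt (fun z : ℂ => Complex.exp (Complex.I * p * z))
        (Complex.exp (Complex.I * p * (x : ℂ)) * (Complex.I * p)) (x : ℂ) := by
      have h := (((hasDerivAt_id ((x : ℝ) : ℂ)).const_mul (Complex.I * p))).cexp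
      simpa using h
    have h2 : HasDerivAt e (Complex.exp (Complex.I * p * (x : ℂ)) * (Complex.I * p)) x :=
      h2c.comp_ofReal
    exact h1.mul h2
  have hint1 : Integrable (fun x : ℝ => deriv (⇑f) x * e x) :=
    integrable_deriv_mul f hsupp p hp
  have hint2 : Integrable (fun x : ℝ => f x * e x) := integrable_f_mul f hsupp p hp
  have hint2' : Integrable (fun x : ℝ => f x * (e x * (Complex.I * p))) := by
    have := hint2.mul_const (Complex.I * p)
    simpa [mul_assoc] using this
  have htop : Tendsto (fun x : ℝ => f x * e x) atTop (nhds 0) := by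
    refine squeeze_zero_norm (fun x => bound_f_mul f hsupp p hp x) ?_
    simpa using (tendsto_f_atTop f hsupp).norm
  have hcont : ContinuousWithinAt (fun x : ℝ => f x * e x) (Set.Ici 0) 0 := by
    refine Continuous.continuousWithinAt ?_
    exact f.continuous.mul (Complex.continuous_exp.comp (by continuity))
  have key := integral_Ioi_of_hasDerivAt_of_tendsto hcont (fun x _ => hderiv x)
    ((hint1.integrableOn).add hint2'.integrableOn) htop
  have hf0 : f (0 : ℝ) = 0 := f_zero f hsupp le_rfl
  rw [hf0] at key
  simp only [zero_mul, zero_sub, neg_zero] at key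
  rw [integral_add hint1.integrableOn hint2'.integrableOn] at key
  have h0ae : ∀ᵐ x : ℝ, x ≠ (0 : ℝ) := by
    rw [ae_iff]
    have hset : {x : ℝ | ¬x ≠ (0:ℝ)} = {(0:ℝ)} := by ext x; simp
    rw [hset]
    exact measure_singleton 0
  have e1 : ∫ x in Set.Ioi (0:ℝ), deriv (⇑f) x * e x = ∫ x : ℝ, deriv (⇑f) x * e x := by
    refine setIntegral_eq_integral_of_ae_compl_eq_zero ?_
    filter_upwards [h0ae] with x hx hxc
    have hx0 : x < 0 := lt_of_le_of_ne (by simpa using hxc) hx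
    simp [deriv_f_zero f hsupp hx0]
  have e2 : ∫ x in Set.Ioi (0:ℝ), f x * (e x * (Complex.I * p))
      = ∫ x : ℝ, f x * (e x * (Complex.I * p)) := by
    refine setIntegral_eq_integral_of_forall_compl_eq_zero ?_
    intro x hx
    simp [f_zero f hsupp (by simpa using hx)]
  rw [e1, e2] at key
  have e3 : ∫ x : ℝ, f x * (e x * (Complex.I * p))
      = (∫ x : ℝ, f x * e x) * (Complex.I * p) := by
    rw [← integral_mul_const]
    congr 1; funext x; ring
  rw [e3] at key
  linear_combination key

end Stmt11Aux

open Stmt11Aux Complex Filter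

/-- For Schwartz `f` supported in `(0,∞)`, `f̂⁺` extends to a bounded
analytic function on the strip `{0 < Im β < π}`, with bound
`|f̂⁺(β+iλ)| ≤ (2π)^{−1/2}‖f'‖₁` and boundary value `f̂⁺(β+iπ) = f̂⁻(β)`. -/
theorem hatPlus_analytic_continuation
    (f : SchwartzMap ℝ ℂ) (hsupp : Function.support (f : ℝ → ℂ) ⊆ Set.Ioi 0) :
    ContinuousOn (hatPlusC (fun x => f x)) {ζ : ℂ | 0 ≤ ζ.im ∧ ζ.im ≤ Real.pi} ∧
    DifferentiableOn ℂ (hatPlusC (fun x => f x)) {ζ : ℂ | 0 < ζ.im ∧ ζ.im < Real.pi} ∧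
    (∀ β : ℝ, hatPlusC (fun x => f x) (β : ℂ) = hatPlus (fun x => f x) β) ∧
    (∀ β lam : ℝ, 0 ≤ lam → lam ≤ Real.pi →
      ‖hatPlusC (fun x => f x) (β + lam * Complex.I)‖
        ≤ (Real.sqrt (2 * Real.pi))⁻¹ * ∫ x : ℝ, ‖deriv (fun y => f y) x‖) ∧
    (∀ β : ℝ, hatPlusC (fun x => f x) (β + Real.pi * Complex.I)
        = hatMinus (fun x => f x) β) := by
  have him : ∀ w : ℂ, 0 ≤ w.im → w.im ≤ Real.pi → 0 ≤ (Complex.exp w).im := by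
    intro w h1 h2
    rw [Complex.exp_im]
    exact mul_nonneg (Real.exp_pos _).le (Real.sin_nonneg_of_nonneg_of_le_pi h1 h2)
  set c : ℂ := ((Real.sqrt (2 * Real.pi) : ℝ) : ℂ)⁻¹ with hc
  refine ⟨?_, ?_, ?_, ?_, ?_⟩
  · -- continuity on the closed strip
    intro ζ hζ
    show ContinuousWithinAt (fun w : ℂ => Complex.I * Complex.exp w *
      (c * ∫ x : ℝ, f x * Complex.exp (Complex.I * Complex.exp w * x)))
      {ζ : ℂ | 0 ≤ ζ.im ∧ ζ.im ≤ Real.pi} ζ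
    refine ContinuousWithinAt.mul
      ((continuous_const.mul Complex.continuous_exp).continuousWithinAt) ?_
    refine ContinuousWithinAt.mul continuousWithinAt_const ?_
    refine continuousWithinAt_of_dominated (bound := fun x => ‖f x‖) ?_ ?_ ?_ ?_
    · exact Filter.Eventually.of_forall fun w => meas_mul f (Complex.exp w)
    · filter_upwards [self_mem_nhdsWithin] with w hw
      exact Filter.Eventually.of_forall fun x =>
        bound_f_mul f hsupp (Complex.exp w) (him w hw.1 hw.2) x
    · exact f.integrable.norm
    · refine Filter.Eventually.of_forall fun x => ?_
      refine Continuous.continuousWithinAt ?_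
      exact continuous_const.mul (Complex.continuous_exp.comp
        ((continuous_const.mul Complex.continuous_exp).mul continuous_const))
  · -- differentiability on the open strip
    intro ζ hζ
    obtain ⟨h1, h2⟩ := hζ
    set ε : ℝ := min ζ.im (Real.pi - ζ.im) with hε
    have hεpos : 0 < ε := lt_min h1 (by linarith)
    have hball : ∀ w ∈ Metric.ball ζ ε, 0 ≤ (Complex.exp w).im := by
      intro w hw
      rw [Metric.mem_ball, Complex.dist_eq] at hw
      have h3 : |(w - ζ).im| ≤ ‖w - ζ‖ := Complex.abs_im_le_norm _
      rw [Complex.sub_im] at h3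
      have h4 : |w.im - ζ.im| < ε := lt_of_le_of_lt h3 hw
      rw [abs_lt] at h4
      have hε1 : ε ≤ ζ.im := min_le_left _ _
      have hε2 : ε ≤ Real.pi - ζ.im := min_le_right _ _
      exact him w (by linarith) (by linarith)
    have hballre : ∀ w ∈ Metric.ball ζ ε, w.re ≤ ζ.re + ε := by
      intro w hw
      rw [Metric.mem_ball, Complex.dist_eq] at hw
      have h3 : |(w - ζ).re| ≤ ‖w - ζ‖ := Complex.abs_re_le_norm _
      rw [Complex.sub_re] at h3
      have h4 : |w.re - ζ.re| < ε := lt_of_le_of_lt h3 hw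
      rw [abs_lt] at h4
      linarith
    have main : HasDerivAt
        (fun w : ℂ => ∫ x : ℝ, f x * Complex.exp (Complex.I * Complex.exp w * x))
        (∫ x : ℝ, f x * (Complex.exp (Complex.I * Complex.exp ζ * x)
          * (Complex.I * Complex.exp ζ * x))) ζ := by
      have H := hasDerivAt_integral_of_dominated_loc_of_deriv_le (μ := volume)
        (F := fun (w : ℂ) (x : ℝ) => f x * Complex.exp (Complex.I * Complex.exp w * x))
        (F' := fun (w : ℂ) (x : ℝ) => f x * (Complex.exp (Complex.I * Complex.exp w * x)
          * (Complex.I * Complex.exp w * x)))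
        (x₀ := ζ) (bound := fun x => ‖f x‖ * (Real.exp (ζ.re + ε) * |x|)) (Metric.ball_mem_nhds ζ hεpos)
        (Filter.Eventually.of_forall fun w => meas_mul f (Complex.exp w))
        (integrable_f_mul f hsupp (Complex.exp ζ) (him ζ h1.le h2.le))
        ?_ ?_ ?_ ?_
      · exact H.2
      · -- measurability of F' ζ
        refine Continuous.aestronglyMeasurable ?_
        refine f.continuous.mul (Continuous.mul ?_ (by continuity))
        exact Complex.continuous_exp.comp (by continuity)
      · -- bound
        refine Filter.Eventually.of_forall fun x => ?_
        intro w hw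
        by_cases hfx : f x = 0
        · simp only [hfx, zero_mul, norm_zero]
          positivity
        · have hx : 0 < x := hsupp hfx
          rw [norm_mul]
          refine mul_le_mul_of_nonneg_left ?_ (norm_nonneg _)
          rw [norm_mul]
          have hb1 : ‖Complex.exp (Complex.I * Complex.exp w * x)‖ ≤ 1 :=
            norm_exp_Ipx_le (hball w hw) hx.le
          have hb2 : ‖Complex.I * Complex.exp w * (x : ℂ)‖ ≤ Real.exp (ζ.re + ε) * |x| := by
            rw [norm_mul, norm_mul]
            simp only [Complex.norm_I, one_mul, Complex.norm_exp,
              Complex.norm_real, Real.norm_eq_abs]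
            refine mul_le_mul_of_nonneg_right ?_ (abs_nonneg _)
            exact Real.exp_le_exp.mpr (hballre w hw)
          calc ‖Complex.exp (Complex.I * Complex.exp w * x)‖
                * ‖Complex.I * Complex.exp w * (x : ℂ)‖
              ≤ 1 * (Real.exp (ζ.re + ε) * |x|) :=
                mul_le_mul hb1 hb2 (norm_nonneg _) zero_le_one
            _ = Real.exp (ζ.re + ε) * |x| := one_mul _
      · -- integrability of bound
        have heq : (fun x : ℝ => ‖f x‖ * (Real.exp (ζ.re + ε) * |x|))
            = fun x : ℝ => Real.exp (ζ.re + ε) * (‖x‖ ^ 1 * ‖f x‖) := by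
          funext x; simp [Real.norm_eq_abs]; ring
        rw [heq]
        exact (f.integrable_pow_mul volume 1).const_mul _
      · -- differentiability in w
        refine Filter.Eventually.of_forall fun x => ?_
        intro w _
        have hg : HasDerivAt (fun w : ℂ => Complex.I * Complex.exp w * (x : ℂ))
            (Complex.I * Complex.exp w * x) w :=
          ((Complex.hasDerivAt_exp w).const_mul Complex.I).mul_const _
        exact hg.cexp.const_mul (f x)
    have hd1 : DifferentiableAt ℂ (fun w : ℂ => Complex.I * Complex.exp w) ζ :=
      Complex.differentiable_exp.differentiableAt.const_mul Complex.I
    have hd2 : DifferentiableAt ℂ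
        (fun w : ℂ => c * ∫ x : ℝ, f x * Complex.exp (Complex.I * Complex.exp w * x)) ζ :=
      main.differentiableAt.const_mul c
    exact ((hd1.mul hd2).differentiableWithinAt)
  · -- real boundary values
    intro β
    simp [hatPlusC, hatPlus, ftilde, Complex.ofReal_exp]
  · -- the bound
    intro β lam h0 hπ
    set ζ : ℂ := (β : ℂ) + (lam : ℂ) * Complex.I with hζdef
    have hζim : ζ.im = lam := by simp [hζdef]
    have hp : 0 ≤ (Complex.exp ζ).im := him ζ (by rw [hζim]; exact h0) (by rw [hζim]; exact hπ)
    have hibp := ibp f hsupp (Complex.exp ζ) hp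
    have hval : hatPlusC (fun x => f x) ζ
        = -(c * ∫ x : ℝ, deriv (⇑f) x * Complex.exp (Complex.I * Complex.exp ζ * x)) := by
      simp only [hatPlusC, hc]
      linear_combination ((Real.sqrt (2 * Real.pi) : ℂ))⁻¹ * hibp
    rw [hval, norm_neg, norm_mul]
    have hcnorm : ‖c‖ = (Real.sqrt (2 * Real.pi))⁻¹ := by
      rw [hc, norm_inv, Complex.norm_real, Real.norm_eq_abs,
        _root_.abs_of_nonneg (Real.sqrt_nonneg _)]
    rw [hcnorm]
    refine mul_le_mul_of_nonneg_left ?_ (by positivity)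
    refine le_trans (norm_integral_le_integral_norm _) ?_
    refine integral_mono ((integrable_deriv_mul f hsupp (Complex.exp ζ) hp).norm) ?_ ?_
    · have h1 : Integrable (fun x : ℝ => deriv (⇑f) x) := by
        rw [deriv_eq_clm f hsupp]; exact (SchwartzMap.derivCLM ℝ ℂ f).integrable
      exact h1.norm
    · exact fun x => bound_deriv_mul f hsupp (Complex.exp ζ) hp x
  · -- boundary value at iπ
    intro β
    have hexp : Complex.exp ((β : ℂ) + (Real.pi : ℂ) * Complex.I)
        = -((Real.exp β : ℝ) : ℂ) := by
      rw [Complex.exp_add, Complex.exp_pi_mul_I, Complex.ofReal_exp]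
      ring
    simp only [hatPlusC, hatMinus, ftilde, hexp]
    push_cast
    ring
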